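/- Let g : [0,s] → ℝ be a nondecreasing function. Then the Lebesgue measure of the closure of the image g([0,s]) equals g(s) - g(0) minus the sum of the jump sizes of g, i.e. |closure(g([0,s]))| = g(s) - g(0) - Σ_{r ∈ [0,s]} (g(r+) - g(r-)) (with the one-sided conventions g(0-) = g(0), g(s+) = g(s)). -/

import Mathlib

open MeasureTheory

/-- The jump of a monotone function `g` on `[0,s]` at the point `r`, with the
one-sided conventions `g(0-) = g 0` and `g(s+) = g s`: the right limit is
`inf_{r < u ≤ s} g u` (for `r < s`) and the left limit is
`sup_{0 ≤ u < r} g u` (for `0 < r`). -/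
noncomputable def monotoneJump (g : ℝ → ℝ) (s r : ℝ) : ℝ :=
  (if r < s then sInf (g '' Set.Ioc r s) else g s)
    - (if 0 < r then sSup (g '' Set.Ico 0 r) else g 0)

theorem measure_closure_image_monotone
    (s : ℝ) (hs : 0 < s) (g : ℝ → ℝ) (hg : MonotoneOn g (Set.Icc 0 s)) :
    (volume (closure (g '' Set.Icc 0 s))).toReal
      = g s - g 0 - ∑' r : Set.Icc (0 : ℝ) s, monotoneJump g s r := by
  set I := Set.Icc (0:ℝ) s with hI
  have h0I : (0:ℝ) ∈ I := ⟨le_refl 0, hs.le⟩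
  have hsI : s ∈ I := ⟨hs.le, le_refl s⟩
  set L : ℝ → ℝ := fun r => if 0 < r then sSup (g '' Set.Ico 0 r) else g 0 with hLdef
  set R : ℝ → ℝ := fun r => if r < s then sInf (g '' Set.Ioc r s) else g s with hRdef
  have hjump : ∀ r, monotoneJump g s r = R r - L r := by
    intro r; simp only [monotoneJump, hRdef, hLdef]
  have hbddA : ∀ r ∈ I, BddAbove (g '' Set.Ico 0 r) := by
    rintro r hr
    refine ⟨g s, ?_⟩
    rintro y ⟨u, hu, rfl⟩
    exact hg ⟨hu.1, hu.2.le.trans hr.2⟩ hsI (hu.2.le.trans hr.2)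
  have hbddB : ∀ r ∈ I, BddBelow (g '' Set.Ioc r s) := by
    rintro r hr
    refine ⟨g 0, ?_⟩
    rintro y ⟨u, hu, rfl⟩
    exact hg h0I ⟨hr.1.trans hu.1.le, hu.2⟩ (hr.1.trans hu.1.le)
  have hLle : ∀ r ∈ I, L r ≤ g r := by
    intro r hr
    simp only [hLdef]
    split_ifs with h
    · refine csSup_le ⟨g 0, 0, ⟨le_rfl, h⟩, rfl⟩ ?_
      rintro y ⟨u, hu, rfl⟩
      exact hg ⟨hu.1, hu.2.le.trans hr.2⟩ hr hu.2.le
    · exact hg h0I hr hr.1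
  have hgR : ∀ r ∈ I, g r ≤ R r := by
    intro r hr
    simp only [hRdef]
    split_ifs with h
    · refine le_csInf ⟨g s, s, ⟨h, le_rfl⟩, rfl⟩ ?_
      rintro y ⟨u, hu, rfl⟩
      exact hg hr ⟨hr.1.trans hu.1.le, hu.2⟩ hu.1.le
    · exact hg hr hsI hr.2
  have hg0L : ∀ r ∈ I, g 0 ≤ L r := by
    intro r hr
    simp only [hLdef]
    split_ifs with h
    · exact le_csSup (hbddA r hr) ⟨0, ⟨le_rfl, h⟩, rfl⟩
    · exact le_rfl
  have hRgs : ∀ r ∈ I, R r ≤ g s := by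
    intro r hr
    simp only [hRdef]
    split_ifs with h
    · exact csInf_le (hbddB r hr) ⟨s, ⟨h, le_rfl⟩, rfl⟩
    · exact le_rfl
  have hcross : ∀ r ∈ I, ∀ r' ∈ I, r < r' → R r ≤ L r' := by
    intro r hr r' hr' hrr'
    set m := (r + r') / 2 with hm
    have hm1 : r < m := by rw [hm]; linarith
    have hm2 : m < r' := by rw [hm]; linarith
    have h1 : R r ≤ g m := by
      simp only [hRdef]
      rw [if_pos (hrr'.trans_le hr'.2)]
      exact csInf_le (hbddB r hr) ⟨m, ⟨hm1, hm2.le.trans hr'.2⟩, rfl⟩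
    have h2 : g m ≤ L r' := by
      simp only [hLdef]
      rw [if_pos (hr.1.trans_lt hrr')]
      exact le_csSup (hbddA r' hr') ⟨m, ⟨hr.1.trans hm1.le, hm2⟩, rfl⟩
    exact h1.trans h2
  set T := {r ∈ I | L r < R r} with hT
  have hTI : T ⊆ I := fun r hr => hr.1
  have hdisj' : ∀ r ∈ T, ∀ r' ∈ T, r < r' →
      Disjoint (Set.Ioo (L r) (R r)) (Set.Ioo (L r') (R r')) := by
    intro r hr r' hr' hrr'
    rw [Set.disjoint_left]
    rintro x ⟨_, hx2⟩ ⟨hx1', _⟩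
    exact absurd ((hx2.trans_le (hcross r hr.1 r' hr'.1 hrr')).trans hx1') (lt_irrefl x)
  have hdisj : T.PairwiseDisjoint (fun r => Set.Ioo (L r) (R r)) := by
    intro r hr r' hr' hne
    rcases lt_or_gt_of_ne hne with h | h
    · exact hdisj' r hr r' hr' h
    · exact (hdisj' r' hr' r hr h).symm
  have hTcount : T.Countable :=
    hdisj.countable_of_isOpen (fun r _ => isOpen_Ioo)
      (fun r hr => Set.nonempty_Ioo.2 hr.2)
  set U := ⋃ r ∈ T, Set.Ioo (L r) (R r) with hU
  have hUopen : IsOpen U := isOpen_biUnion fun _ _ => isOpen_Ioo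
  have hUsub : U ⊆ Set.Icc (g 0) (g s) := by
    intro x hx
    rcases Set.mem_iUnion₂.mp hx with ⟨r, hr, hx1, hx2⟩
    exact ⟨(hg0L r hr.1).trans hx1.le, hx2.le.trans (hRgs r hr.1)⟩
  have hgs0 : g 0 ≤ g s := hg h0I hsI hs.le
  have hUfin : volume U ≤ ENNReal.ofReal (g s - g 0) := by
    calc volume U ≤ volume (Set.Icc (g 0) (g s)) := measure_mono hUsub
    _ = ENNReal.ofReal (g s - g 0) := Real.volume_Icc
  have hUne : volume U ≠ ⊤ := (hUfin.trans_lt ENNReal.ofReal_lt_top).ne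
  have hUvol : volume U = ∑' r : T, ENNReal.ofReal (R r - L r) := by
    rw [hU, measure_biUnion hTcount hdisj (fun _ _ => measurableSet_Ioo)]
    simp [Real.volume_Ioo]
  have himgsub : g '' I ⊆ Set.Icc (g 0) (g s) := by
    rintro y ⟨u, hu, rfl⟩
    exact ⟨hg h0I hu hu.1, hg hu hsI hu.2⟩
  have hclos_sub : closure (g '' I) ⊆ Set.Icc (g 0) (g s) :=
    closure_minimal himgsub isClosed_Icc
  -- Claim A
  have claimA : Set.Icc (g 0) (g s) \ U ⊆ closure (g '' I) := by
    rintro y ⟨⟨hy0, hys⟩, hyU⟩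
    rcases eq_or_lt_of_le hy0 with h0 | h0
    · exact subset_closure ⟨0, h0I, h0⟩
    rcases eq_or_lt_of_le hys with hs' | hs'
    · exact subset_closure ⟨s, hsI, hs'.symm⟩
    set A := {u : ℝ | u ∈ I ∧ g u ≤ y} with hA
    have hA0 : 0 ∈ A := ⟨h0I, h0.le⟩
    have hAne : A.Nonempty := ⟨0, hA0⟩
    have hAbdd : BddAbove A := ⟨s, fun u hu => hu.1.2⟩
    set r := sSup A with hrdef
    have hr0 : 0 ≤ r := le_csSup hAbdd hA0
    have hrs : r ≤ s := csSup_le hAne fun u hu => hu.1.2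
    have hrI : r ∈ I := ⟨hr0, hrs⟩
    have hlt : ∀ u ∈ I, u < r → g u ≤ y := by
      intro u hu hur
      obtain ⟨a, ha, hua⟩ := exists_lt_of_lt_csSup hAne hur
      exact (hg hu ha.1 hua.le).trans ha.2
    have hgt : ∀ u ∈ I, r < u → y < g u := by
      intro u hu hru
      by_contra h
      exact absurd (le_csSup hAbdd ⟨hu, not_lt.mp h⟩) (not_le.mpr hru)
    have hLy : L r ≤ y := by
      simp only [hLdef]
      split_ifs with h
      · refine csSup_le ⟨g 0, 0, ⟨le_rfl, h⟩, rfl⟩ ?_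
        rintro z ⟨u, hu, rfl⟩
        exact hlt u ⟨hu.1, hu.2.le.trans hrs⟩ hu.2
      · exact h0.le
    have hyR : y ≤ R r := by
      simp only [hRdef]
      split_ifs with h
      · refine le_csInf ⟨g s, s, ⟨h, le_rfl⟩, rfl⟩ ?_
        rintro z ⟨u, hu, rfl⟩
        exact (hgt u ⟨hr0.trans hu.1.le, hu.2⟩ hu.1).le
      · exact hs'.le
    rcases eq_or_lt_of_le hLy with hyL | hyL
    · -- y = L r
      have h0r : 0 < r := by
        by_contra h
        have hr00 : r = 0 := le_antisymm (not_lt.mp h) hr0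
        rw [hr00] at hyL
        simp only [hLdef, if_neg (lt_irrefl (0:ℝ))] at hyL
        exact absurd hyL (ne_of_lt h0)
      have hmem : y ∈ closure (g '' Set.Ico 0 r) := by
        rw [← hyL]
        simp only [hLdef, if_pos h0r]
        exact csSup_mem_closure ⟨g 0, 0, ⟨le_rfl, h0r⟩, rfl⟩ (hbddA r hrI)
      refine closure_mono (Set.image_mono (f := g) ?_) hmem
      intro u hu; exact ⟨hu.1, hu.2.le.trans hrs⟩
    rcases eq_or_lt_of_le hyR with hyR' | hyR'
    · -- y = R r
      have hrlt : r < s := by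
        by_contra h
        have hrss : r = s := le_antisymm hrs (not_lt.mp h)
        rw [hrss] at hyR'
        simp only [hRdef, if_neg (lt_irrefl s)] at hyR'
        exact absurd hyR' (ne_of_lt hs')
      have hmem : y ∈ closure (g '' Set.Ioc r s) := by
        rw [hyR']
        simp only [hRdef, if_pos hrlt]
        exact csInf_mem_closure ⟨g s, s, ⟨hrlt, le_rfl⟩, rfl⟩ (hbddB r hrI)
      refine closure_mono (Set.image_mono (f := g) ?_) hmem
      intro u hu; exact ⟨hr0.trans hu.1.le, hu.2⟩
    · refine absurd ?_ hyU
      have hrT : r ∈ T := ⟨hrI, hyL.trans hyR'⟩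
      exact Set.mem_biUnion hrT ⟨hyL, hyR'⟩
  -- Claim B
  have claimB : closure (g '' I) ∩ U ⊆ g '' T := by
    rintro y ⟨hyc, hyU⟩
    rcases Set.mem_iUnion₂.mp hyU with ⟨r, hrT, hy⟩
    have h1 : y ∈ closure (Set.Ioo (L r) (R r) ∩ g '' I) :=
      IsOpen.inter_closure isOpen_Ioo ⟨hy, hyc⟩
    have h2 : Set.Ioo (L r) (R r) ∩ g '' I ⊆ {g r} := by
      rintro z ⟨hz, u, hu, rfl⟩
      rcases lt_trichotomy u r with h | h | h
      · have : g u ≤ L r := by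
          simp only [hLdef, if_pos (hu.1.trans_lt h)]
          exact le_csSup (hbddA r hrT.1) ⟨u, ⟨hu.1, h⟩, rfl⟩
        exact absurd (this.trans_lt hz.1) (lt_irrefl _)
      · rw [h]; rfl
      · have : R r ≤ g u := by
          simp only [hRdef, if_pos (h.trans_le hu.2)]
          exact csInf_le (hbddB r hrT.1) ⟨u, ⟨h, hu.2⟩, rfl⟩
        exact absurd (hz.2.trans_le this) (lt_irrefl _)
    have h3 : y ∈ ({g r} : Set ℝ) := by
      have := closure_mono h2 h1
      rwa [closure_singleton] at this
    exact ⟨r, hrT, h3.symm⟩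
  have hBcount : (closure (g '' I) ∩ U).Countable :=
    (hTcount.image g).mono claimB
  have hvz : volume (closure (g '' I) ∩ U) = 0 := hBcount.measure_zero _
  have hkey : volume (closure (g '' I)) = volume (Set.Icc (g 0) (g s) \ U) := by
    have e1 : closure (g '' I) \ (closure (g '' I) ∩ U) = closure (g '' I) \ U :=
      Set.diff_self_inter
    have e2 : closure (g '' I) \ U = Set.Icc (g 0) (g s) \ U := by
      apply Set.Subset.antisymm
      · exact Set.diff_subset_diff_left hclos_sub
      · rintro x ⟨hx1, hx2⟩
        exact ⟨claimA ⟨hx1, hx2⟩, hx2⟩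
    rw [← measure_diff_null (s := closure (g '' I)) hvz, e1, e2]
  have hdiffvol : volume (Set.Icc (g 0) (g s) \ U)
      = ENNReal.ofReal (g s - g 0) - volume U := by
    rw [measure_diff hUsub hUopen.measurableSet.nullMeasurableSet hUne, Real.volume_Icc]
  -- tsum equality in ENNReal
  have htsum : (∑' r : I, ENNReal.ofReal (monotoneJump g s r)) = volume U := by
    rw [hUvol]
    have e1 : (∑' r : T, ENNReal.ofReal (R r - L r))
        = ∑' r : T, ENNReal.ofReal (monotoneJump g s r) :=
      tsum_congr (fun r => by rw [hjump])
    rw [e1, tsum_subtype T (fun r => ENNReal.ofReal (monotoneJump g s r)),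
        tsum_subtype I (fun r => ENNReal.ofReal (monotoneJump g s r))]
    congr 1
    funext x
    by_cases hxT : x ∈ T
    · rw [Set.indicator_of_mem hxT, Set.indicator_of_mem (hTI hxT)]
    by_cases hxI : x ∈ I
    · rw [Set.indicator_of_notMem hxT, Set.indicator_of_mem hxI]
      have : monotoneJump g s x ≤ 0 := by
        rw [hjump]
        have : ¬ L x < R x := fun h => hxT ⟨hxI, h⟩
        linarith [not_lt.mp this]
      rw [ENNReal.ofReal_of_nonpos this]
    · rw [Set.indicator_of_notMem hxT, Set.indicator_of_notMem hxI]
  have htsum_ne : (∑' r : I, ENNReal.ofReal (monotoneJump g s r)) ≠ ⊤ := by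
    rw [htsum]; exact hUne
  have hreal : (∑' r : I, ENNReal.ofReal (monotoneJump g s r)).toReal
      = ∑' r : I, monotoneJump g s r := by
    rw [ENNReal.tsum_toReal_eq (fun a => ENNReal.ofReal_ne_top)]
    refine tsum_congr (fun r => ?_)
    rw [ENNReal.toReal_ofReal]
    rw [hjump]
    have := (hLle r r.2).trans (hgR r r.2)
    linarith
  rw [hkey, hdiffvol, ENNReal.toReal_sub_of_le hUfin ENNReal.ofReal_ne_top,
      ENNReal.toReal_ofReal (by linarith), ← htsum, hreal]
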